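/- arXiv:1503.06883 — 5 statements merged into one kernel-verified Lean document; each statement's English description precedes it below -/
import Mathlib

section
/- If M = D - A is a symmetric diagonally dominant M-matrix (symmetric positive definite with non-positive off-diagonal entries and diagonal dominance), where D is the positive diagonal part and A is the non-negative symmetric off-diagonal part, then D - A D⁻¹ A is also a symmetric diagonally dominant M-matrix. -/
open Finset Matrix

/-- An SDDM matrix: symmetric positive definite, non-positive off-diagonal entries,
and diagonally dominant. -/
def IsSDDM {n : ℕ} (M : Matrix (Fin n) (Fin n) ℝ) : Prop :=
  M.PosDef ∧ (∀ i j, i ≠ j → M i j ≤ 0) ∧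
    (∀ i, -∑ j ∈ Finset.univ.erase i, M i j ≤ M i i)

private lemma dot_symm {n : ℕ} (P : Matrix (Fin n) (Fin n) ℝ)
    (hP : ∀ i j, P i j = P j i) (v w : Fin n → ℝ) :
    v ⬝ᵥ (P *ᵥ w) = w ⬝ᵥ (P *ᵥ v) := by
  have hPt : Pᵀ = P := by ext i j; exact hP j i
  rw [Matrix.dotProduct_mulVec, ← Matrix.mulVec_transpose, hPt, dotProduct_comm]

/-- If `M = D - A` is SDDM with standard splitting, then `D - A D⁻¹ A` is SDDM. -/
theorem stmt0 {n : ℕ} (M D A : Matrix (Fin n) (Fin n) ℝ)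
    (hM : IsSDDM M)
    (hD : D = Matrix.diagonal (fun i => M i i))
    (hA : A = D - M) :
    IsSDDM (D - A * D⁻¹ * A) := by
  obtain ⟨hPD, hoff, hdom⟩ := hM
  have hsym : ∀ i j, M i j = M j i := by
    intro i j
    have := congrFun (congrFun hPD.1 i) j
    simpa using this.symm
  -- diagonal entries positive
  have hd : ∀ i, 0 < M i i := by
    intro i
    have hne : (Pi.single i 1 : Fin n → ℝ) ≠ 0 := by
      intro h
      have := congrFun h i
      simp at this
    have h := hPD.dotProduct_mulVec_pos hne
    simpa [Matrix.mulVec_single, single_dotProduct] using h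
  -- entries of A
  have hAe : ∀ i j, A i j = if i = j then 0 else -(M i j) := by
    intro i j
    by_cases h : i = j
    · subst h; simp [hA, hD, Matrix.sub_apply, Matrix.diagonal_apply_eq]
    · simp [hA, hD, Matrix.sub_apply, Matrix.diagonal_apply_ne _ h, h]
  have hA0 : ∀ i j, 0 ≤ A i j := by
    intro i j
    rw [hAe]
    by_cases h : i = j
    · simp [h]
    · simp only [if_neg h]
      linarith [hoff i j h]
  have hAsym : ∀ i j, A i j = A j i := by
    intro i j
    rw [hAe, hAe]
    by_cases h : i = j
    · simp [h]
    · simp [h, Ne.symm h, hsym i j]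
  -- inverse of D
  have hDinv : D⁻¹ = Matrix.diagonal (fun i => (M i i)⁻¹) := by
    apply Matrix.inv_eq_right_inv
    rw [hD, Matrix.diagonal_mul_diagonal]
    have : (fun i => M i i * (M i i)⁻¹) = fun _ => (1 : ℝ) :=
      funext fun i => mul_inv_cancel₀ (ne_of_gt (hd i))
    rw [this, Matrix.diagonal_one]
  -- entries of T = A * D⁻¹ * A
  have hT : ∀ i j, (A * D⁻¹ * A) i j = ∑ k, A i k * (M k k)⁻¹ * A k j := by
    intro i j
    rw [Matrix.mul_apply]
    refine Finset.sum_congr rfl fun k _ => ?_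
    rw [hDinv, Matrix.mul_diagonal]
  have hT0 : ∀ i j, 0 ≤ (A * D⁻¹ * A) i j := by
    intro i j
    rw [hT]
    refine Finset.sum_nonneg fun k _ => ?_
    exact mul_nonneg (mul_nonneg (hA0 i k) (inv_nonneg.2 (le_of_lt (hd k)))) (hA0 k j)
  have hTsym : ∀ i j, (A * D⁻¹ * A) i j = (A * D⁻¹ * A) j i := by
    intro i j
    rw [hT, hT]
    refine Finset.sum_congr rfl fun k _ => ?_
    rw [hAsym i k, hAsym k j]
    ring
  have hNsym : ∀ i j, (D - A * D⁻¹ * A) i j = (D - A * D⁻¹ * A) j i := by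
    intro i j
    simp only [Matrix.sub_apply]
    rw [hTsym i j, hD]
    by_cases h : i = j
    · subst h; rfl
    · rw [Matrix.diagonal_apply_ne _ h, Matrix.diagonal_apply_ne _ (Ne.symm h)]
  have hherm : (D - A * D⁻¹ * A).IsHermitian := by
    ext i j
    simp only [Matrix.conjTranspose_apply, star_trivial]
    exact hNsym j i
  -- row sums of A
  have hrow : ∀ k, ∑ j, A k j ≤ M k k := by
    intro k
    have h1 : A k k + ∑ j ∈ Finset.univ.erase k, A k j = ∑ j, A k j :=
      Finset.add_sum_erase _ _ (Finset.mem_univ k)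
    have h2 : ∑ j ∈ Finset.univ.erase k, A k j = -∑ j ∈ Finset.univ.erase k, M k j := by
      rw [← Finset.sum_neg_distrib]
      refine Finset.sum_congr rfl fun j hj => ?_
      have hjk : j ≠ k := Finset.ne_of_mem_erase hj
      rw [hAe]; simp [Ne.symm hjk]
    have h3 : A k k = 0 := by rw [hAe]; simp
    rw [← h1, h3, zero_add, h2]
    exact hdom k
  have hrow0 : ∀ k, 0 ≤ ∑ j, A k j := fun k =>
    Finset.sum_nonneg fun j _ => hA0 k j
  -- full row sums of T bounded by diagonal
  have hTrow : ∀ i, ∑ j, (A * D⁻¹ * A) i j ≤ M i i := by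
    intro i
    have e1 : ∑ j, (A * D⁻¹ * A) i j = ∑ k, A i k * (M k k)⁻¹ * (∑ j, A k j) := by
      simp_rw [hT]
      rw [Finset.sum_comm]
      refine Finset.sum_congr rfl fun k _ => ?_
      rw [Finset.mul_sum]
    have e2 : ∑ k, A i k * (M k k)⁻¹ * (∑ j, A k j) ≤ ∑ k, A i k := by
      refine Finset.sum_le_sum fun k _ => ?_
      have hinv : (M k k)⁻¹ * (∑ j, A k j) ≤ 1 := by
        rw [← inv_mul_cancel₀ (ne_of_gt (hd k))]
        exact mul_le_mul_of_nonneg_left (hrow k) (inv_nonneg.2 (le_of_lt (hd k)))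
      calc A i k * (M k k)⁻¹ * (∑ j, A k j) = A i k * ((M k k)⁻¹ * ∑ j, A k j) := by ring
        _ ≤ A i k * 1 := mul_le_mul_of_nonneg_left hinv (hA0 i k)
        _ = A i k := mul_one _
    calc ∑ j, (A * D⁻¹ * A) i j ≤ ∑ k, A i k := e1 ▸ e2
      _ ≤ M i i := hrow i
  -- positivity of quadratic form of D + A
  have hDA : ∀ z : Fin n → ℝ, z ≠ 0 → 0 < z ⬝ᵥ ((D + A) *ᵥ z) := by
    intro z hz
    set w : Fin n → ℝ := fun i => |z i| with hw
    have hwne : w ≠ 0 := by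
      intro h
      apply hz
      funext i
      have := congrFun h i
      simpa [hw, abs_eq_zero] using this
    have hMw : 0 < w ⬝ᵥ (M *ᵥ w) := by
      have := hPD.dotProduct_mulVec_pos hwne
      simpa using this
    have hle : w ⬝ᵥ (M *ᵥ w) ≤ z ⬝ᵥ ((D + A) *ᵥ z) := by
      simp only [dotProduct, Matrix.mulVec, dotProduct]
      rw [show ∀ f : Fin n → ℝ, ∑ i, f i = ∑ i, f i from fun _ => rfl]
      refine Finset.sum_le_sum fun i _ => ?_
      rw [Finset.mul_sum, Finset.mul_sum]
      refine Finset.sum_le_sum fun j _ => ?_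
      by_cases h : i = j
      · subst h
        have : (D + A) i i = M i i := by
          rw [Matrix.add_apply, hD, Matrix.diagonal_apply_eq, hAe]; simp
        rw [this]
        have h4 : w i * w i = z i * z i := abs_mul_abs_self (z i)
        have h5 : w i * (M i i * w i) = z i * (M i i * z i) := by
          rw [show w i * (M i i * w i) = M i i * (w i * w i) from by ring, h4]; ring
        linarith
      · have hDAij : (D + A) i j = A i j := by
          rw [Matrix.add_apply, hD, Matrix.diagonal_apply_ne _ h, zero_add]
        have hMij : M i j = -A i j := by rw [hAe]; simp [h]
        rw [hDAij, hMij]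
        have h1 : -(A i j * |z i * z j|) ≤ A i j * (z i * z j) := by
          have := mul_le_mul_of_nonneg_left (neg_abs_le (z i * z j)) (hA0 i j)
          linarith [this]
        have h2 : w i * (-A i j * w j) = -(A i j * |z i * z j|) := by
          rw [abs_mul]; simp [hw]; ring
        calc w i * (-A i j * w j) = -(A i j * |z i * z j|) := h2
          _ ≤ A i j * (z i * z j) := h1
          _ = z i * (A i j * z j) := by ring
    linarith
  refine ⟨Matrix.PosDef.of_dotProduct_mulVec_pos hherm ?_, ?_, ?_⟩
  · -- positive definiteness
    intro x hx
    rw [star_trivial]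
    set u : Fin n → ℝ := A *ᵥ x with hu
    set y : Fin n → ℝ := D⁻¹ *ᵥ u with hy
    have hDy : D *ᵥ y = u := by
      funext i
      rw [hy, hDinv, hD, Matrix.mulVec_diagonal, Matrix.mulVec_diagonal]
      rw [← mul_assoc, mul_inv_cancel₀ (ne_of_gt (hd i)), one_mul]
    have hNx : (D - A * D⁻¹ * A) *ᵥ x = D *ᵥ x - A *ᵥ y := by
      rw [Matrix.sub_mulVec]
      congr 1
      rw [hy, hu, Matrix.mulVec_mulVec, Matrix.mulVec_mulVec, Matrix.mul_assoc]
    have hq : x ⬝ᵥ ((D - A * D⁻¹ * A) *ᵥ x) = x ⬝ᵥ (D *ᵥ x) - x ⬝ᵥ (A *ᵥ y) := by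
      rw [hNx, dotProduct_sub]
    have hDsymm : ∀ i j, D i j = D j i := by
      intro i j
      rw [hD]
      by_cases h : i = j
      · subst h; rfl
      · rw [Matrix.diagonal_apply_ne _ h, Matrix.diagonal_apply_ne _ (Ne.symm h)]
    -- key: x ⬝ A y = y ⬝ D y
    have p5 : x ⬝ᵥ (A *ᵥ y) = y ⬝ᵥ (D *ᵥ y) := by
      rw [dot_symm A hAsym x y, ← hu, ← hDy]
    have hMDA : D - A = M := by rw [hA]; abel
    -- expansion identity
    have hS1 : (x - y) ⬝ᵥ ((D + A) *ᵥ (x - y)) =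
        x ⬝ᵥ (D *ᵥ x) + y ⬝ᵥ (D *ᵥ y) - 2 * (x ⬝ᵥ (D *ᵥ y))
        + x ⬝ᵥ (A *ᵥ x) + y ⬝ᵥ (A *ᵥ y) - 2 * (x ⬝ᵥ (A *ᵥ y)) := by
      rw [Matrix.add_mulVec, Matrix.mulVec_sub, Matrix.mulVec_sub]
      simp only [dotProduct_add, dotProduct_sub, sub_dotProduct]
      rw [dot_symm D hDsymm y x, dot_symm A hAsym y x]
      ring
    have hS2 : (x + y) ⬝ᵥ (M *ᵥ (x + y)) =
        x ⬝ᵥ (D *ᵥ x) + y ⬝ᵥ (D *ᵥ y) + 2 * (x ⬝ᵥ (D *ᵥ y))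
        - x ⬝ᵥ (A *ᵥ x) - y ⬝ᵥ (A *ᵥ y) - 2 * (x ⬝ᵥ (A *ᵥ y)) := by
      rw [← hMDA, Matrix.sub_mulVec, Matrix.mulVec_add, Matrix.mulVec_add]
      simp only [dotProduct_add, dotProduct_sub, add_dotProduct]
      rw [dot_symm D hDsymm y x, dot_symm A hAsym y x]
      ring
    have hS1nn : 0 ≤ (x - y) ⬝ᵥ ((D + A) *ᵥ (x - y)) := by
      by_cases h : x - y = 0
      · rw [h]; simp
      · exact le_of_lt (hDA _ h)
    have hS2nn : 0 ≤ (x + y) ⬝ᵥ (M *ᵥ (x + y)) := by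
      by_cases h : x + y = 0
      · rw [h]; simp
      · have := hPD.dotProduct_mulVec_pos h; simpa using le_of_lt this
    by_cases hxy : x + y = 0
    · have hxy2 : x - y ≠ 0 := by
        intro h
        apply hx
        have h1 : y = -x := by
          funext i
          have := congrFun hxy i
          simp only [Pi.add_apply, Pi.zero_apply] at this
          simp; linarith
        rw [h1, sub_neg_eq_add] at h
        funext i
        have := congrFun h i
        simp only [Pi.add_apply, Pi.zero_apply] at this
        simpa using by linarith
      have h1 : 0 < (x - y) ⬝ᵥ ((D + A) *ᵥ (x - y)) := hDA _ hxy2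
      have h2 : (x + y) ⬝ᵥ (M *ᵥ (x + y)) = 0 := by rw [hxy]; simp
      rw [hq]
      linarith [p5, hS1, hS2, h1, h2]
    · have h1 : 0 < (x + y) ⬝ᵥ (M *ᵥ (x + y)) := by
        have := hPD.dotProduct_mulVec_pos hxy; simpa using this
      rw [hq]
      linarith [p5, hS1, hS2, h1, hS1nn]
  · -- off-diagonal nonpositive
    intro i j hij
    have hDoff : D i j = 0 := by rw [hD]; exact Matrix.diagonal_apply_ne _ hij
    simp only [Matrix.sub_apply]
    rw [hDoff]
    linarith [hT0 i j]
  · -- diagonal dominance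
    intro i
    have hNd : (D - A * D⁻¹ * A) i i = M i i - (A * D⁻¹ * A) i i := by
      rw [Matrix.sub_apply, hD, Matrix.diagonal_apply_eq]
    have hNe : ∀ j, j ≠ i → (D - A * D⁻¹ * A) i j = -((A * D⁻¹ * A) i j) := by
      intro j hj
      rw [Matrix.sub_apply, hD, Matrix.diagonal_apply_ne _ (Ne.symm hj), zero_sub]
    have e1 : ∑ j ∈ Finset.univ.erase i, (D - A * D⁻¹ * A) i j
        = -∑ j ∈ Finset.univ.erase i, (A * D⁻¹ * A) i j := by
      rw [← Finset.sum_neg_distrib]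
      exact Finset.sum_congr rfl fun j hj => hNe j (Finset.ne_of_mem_erase hj)
    have e2 : (A * D⁻¹ * A) i i + ∑ j ∈ Finset.univ.erase i, (A * D⁻¹ * A) i j
        = ∑ j, (A * D⁻¹ * A) i j :=
      Finset.add_sum_erase _ _ (Finset.mem_univ i)
    rw [e1, hNd, neg_neg]
    have := hTrow i
    linarith [e2, this]
end

section
/- Let M = D - A be an SDDM matrix with standard splitting, where D is positive diagonal and A is symmetric non-negative. Then (D - A)⁻¹ = (1/2)[D⁻¹ + (I + D⁻¹A)(D - A D⁻¹ A)⁻¹(I + A D⁻¹)]. -/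
/-- For an SDDM matrix `M = D - A` with standard splitting,
`(D - A)⁻¹ = (1/2)[D⁻¹ + (I + D⁻¹A)(D - A D⁻¹ A)⁻¹(I + A D⁻¹)]`. -/
theorem stmt1 {n : ℕ} (M D A : Matrix (Fin n) (Fin n) ℝ)
    (hM : IsSDDM M)
    (hD : D = Matrix.diagonal (fun i => M i i))
    (hA : A = D - M) :
    (D - A)⁻¹ = (1/2 : ℝ) •
      (D⁻¹ + (1 + D⁻¹ * A) * (D - A * D⁻¹ * A)⁻¹ * (1 + A * D⁻¹)) := by
  obtain ⟨hpd, hoff, _hdom⟩ := hM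
  have hDA : D - A = M := by rw [hA, sub_sub_cancel]
  -- diagonal entries of M are positive
  have hdiag : ∀ i, 0 < M i i := by
    intro i
    have h := hpd.dotProduct_mulVec_pos (x := Pi.single i 1) (by
      intro h
      have := congrFun h i
      simp at this)
    simpa [dotProduct, Matrix.mulVec, Pi.single_apply, Finset.mul_sum] using h
  -- D is invertible
  have hDdet : IsUnit D.det := by
    rw [hD, Matrix.det_diagonal]
    exact (Finset.prod_pos (fun i _ => hdiag i)).ne'.isUnit
  have hDinvD : D⁻¹ * D = 1 := Matrix.nonsing_inv_mul D hDdet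
  have hDDinv : D * D⁻¹ = 1 := Matrix.mul_nonsing_inv D hDdet
  -- A has nonnegative entries, zero diagonal
  have hAnn : ∀ i j, 0 ≤ A i j := by
    intro i j
    rcases eq_or_ne i j with rfl | hij
    · simp [hA, hD]
    · have := hoff i j hij
      simp [hA, hD, Matrix.diagonal_apply_ne _ hij]
      linarith
  -- D + A is positive definite
  have hherm : (D + A).IsHermitian := by
    have hMh : M.IsHermitian := hpd.1
    have hDh : D.IsHermitian := by rw [hD]; exact Matrix.isHermitian_diagonal _
    have hAh : A.IsHermitian := by rw [hA]; exact hDh.sub hMh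
    exact hDh.add hAh
  have hDApd : (D + A).PosDef := by
    refine Matrix.PosDef.of_dotProduct_mulVec_pos hherm fun x hx => ?_
    set y : Fin n → ℝ := fun i => |x i| with hy
    have hy0 : y ≠ 0 := by
      intro h
      apply hx
      funext i
      have := congrFun h i
      simpa [hy, abs_eq_zero] using this
    have hMy := hpd.dotProduct_mulVec_pos hy0
    rw [← hDA] at hMy
    simp only [star_trivial] at hMy ⊢
    calc (0:ℝ) < dotProduct y ((D - A).mulVec y) := hMy
      _ ≤ dotProduct x ((D + A).mulVec x) := by
        simp only [dotProduct, Matrix.mulVec, Finset.mul_sum]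
        refine Finset.sum_le_sum fun i _ => Finset.sum_le_sum fun j _ => ?_
        rcases eq_or_ne i j with rfl | hij
        · have hAii : A i i = 0 := by simp [hA, hD]
          simp [hy, Matrix.sub_apply, Matrix.add_apply, hAii]
          ring_nf
          rw [sq_abs, mul_comm]
        · have hD0 : D i j = 0 := by rw [hD]; exact Matrix.diagonal_apply_ne _ hij
          simp only [Matrix.sub_apply, Matrix.add_apply, hD0, zero_sub, zero_add, hy]
          have h1 : -(|x i| * |x j|) ≤ x i * x j := by
            rw [← abs_mul]; exact neg_abs_le _
          nlinarith [hAnn i j, mul_le_mul_of_nonneg_left h1 (hAnn i j)]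
  -- the Schur-type matrix N is invertible
  set N : Matrix (Fin n) (Fin n) ℝ := D - A * D⁻¹ * A with hN
  have hADD : A * D⁻¹ * D = A := by rw [mul_assoc, hDinvD, mul_one]
  have hNfact : N = (1 + A * D⁻¹) * (D - A) := by
    rw [hN, add_mul, one_mul, mul_sub, hADD]
    abel
  have hMunit : IsUnit M := hpd.isUnit
  have hDAunit : IsUnit (1 + A * D⁻¹) := by
    have : (1 + A * D⁻¹) = (D + A) * D⁻¹ := by rw [add_mul, hDDinv]
    rw [this]
    refine hDApd.isUnit.mul ((Matrix.isUnit_iff_isUnit_det _).mpr ?_)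
    rw [Matrix.det_nonsing_inv]
    exact hDdet.ringInverse
  have hNunit : IsUnit N.det := by
    rw [hNfact]
    exact (Matrix.isUnit_iff_isUnit_det _).mp (hDAunit.mul (hDA ▸ hMunit))
  have hNinvN : N⁻¹ * N = 1 := Matrix.nonsing_inv_mul N hNunit
  -- conclude
  apply Matrix.inv_eq_left_inv
  rw [Matrix.smul_mul, add_mul, mul_assoc, ← hNfact, mul_assoc, hNinvN, mul_one,
    sub_eq_add_neg D A, mul_add, hDinvD, mul_neg]
  have : (1:Matrix (Fin n) (Fin n) ℝ) + -(D⁻¹ * A) + (1 + D⁻¹ * A) = (2:ℝ) • 1 := by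
    rw [two_smul]; abel
  rw [this, smul_smul]
  norm_num
end

section
/- Let M₀ = D₀ − A₀ be an SDDM matrix with standard splitting. Suppose 0 < γI ⪯ M₀ and the matrices of the chain satisfy, for i = 1,…,d: Dᵢ − Aᵢ ≈_{εᵢ₋₁} Dᵢ₋₁ − Aᵢ₋₁Dᵢ₋₁⁻¹Aᵢ₋₁, Dᵢ ≈_{εᵢ₋₁} Dᵢ₋₁, and D_d ≈_{ε_d} D_d − A_d. Then the operator Z₀ defined by the recursion x_d = D_d⁻¹ b_d and xᵢ = (1/2)[Dᵢ⁻¹bᵢ + (I + Dᵢ⁻¹Aᵢ)x_{i+1}] with bᵢ = (I + Aᵢ₋₁Dᵢ₋₁⁻¹)bᵢ₋₁ satisfies Z₀ ≈_{∑_{i=0}^{d} εᵢ} M₀⁻¹. -/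
open Matrix

/-- Loewner order: `X ⪯ Y` iff `Y - X` is positive semidefinite. -/
def LoewnerLE {n : ℕ} (X Y : Matrix (Fin n) (Fin n) ℝ) : Prop := (Y - X).PosSemidef

/-- `X ≈_α Y` iff `e^{-α} X ⪯ Y ⪯ e^{α} X` in the Loewner order. -/
def ApproxA {n : ℕ} (α : ℝ) (X Y : Matrix (Fin n) (Fin n) ℝ) : Prop :=
  LoewnerLE (Real.exp (-α) • X) Y ∧ LoewnerLE Y (Real.exp α • X)

namespace Stmt7Aux

variable {n : ℕ}

lemma psd_smul {M : Matrix (Fin n) (Fin n) ℝ} (hM : M.PosSemidef) {c : ℝ} (hc : 0 ≤ c) :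
    (c • M).PosSemidef := by
  refine Matrix.posSemidef_iff_dotProduct_mulVec.mpr ⟨?_, fun x => ?_⟩
  · rw [Matrix.IsHermitian, conjTranspose_smul, star_trivial, hM.1.eq]
  · rw [Matrix.smul_mulVec, dotProduct_smul, smul_eq_mul]
    exact mul_nonneg hc ((Matrix.posSemidef_iff_dotProduct_mulVec.mp hM).2 x)

lemma pd_smul {M : Matrix (Fin n) (Fin n) ℝ} (hM : M.PosDef) {c : ℝ} (hc : 0 < c) :
    (c • M).PosDef := by
  refine Matrix.posDef_iff_dotProduct_mulVec.mpr ⟨?_, fun x hx => ?_⟩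
  · rw [Matrix.IsHermitian, conjTranspose_smul, star_trivial, hM.1.eq]
  · rw [Matrix.smul_mulVec, dotProduct_smul, smul_eq_mul]
    exact mul_pos hc ((Matrix.posDef_iff_dotProduct_mulVec.mp hM).2 hx)

lemma loe_congr {X Y C : Matrix (Fin n) (Fin n) ℝ} (h : LoewnerLE X Y) :
    LoewnerLE (C * X * Cᵀ) (C * Y * Cᵀ) := by
  have h2 := h.mul_mul_conjTranspose_same C
  rw [conjTranspose_eq_transpose_of_trivial] at h2
  unfold LoewnerLE
  have e : C * (Y - X) * Cᵀ = C * Y * Cᵀ - C * X * Cᵀ := by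
    rw [Matrix.mul_sub, Matrix.sub_mul]
  rwa [e] at h2

lemma posdef_of_loe {X Y : Matrix (Fin n) (Fin n) ℝ} {c : ℝ} (hc : 0 < c) (hX : X.PosDef)
    (hY : Yᵀ = Y) (h : LoewnerLE (c • X) Y) : Y.PosDef := by
  refine Matrix.posDef_iff_dotProduct_mulVec.mpr ⟨?_, fun x hx => ?_⟩
  · rw [Matrix.IsHermitian, conjTranspose_eq_transpose_of_trivial, hY]
  · have h1 := (Matrix.posSemidef_iff_dotProduct_mulVec.mp h).2 x
    have h2 := (Matrix.posDef_iff_dotProduct_mulVec.mp hX).2 hx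
    have e : (star x) ⬝ᵥ (Y *ᵥ x) =
        (star x) ⬝ᵥ ((Y - c • X) *ᵥ x) + c * ((star x) ⬝ᵥ (X *ᵥ x)) := by
      rw [Matrix.sub_mulVec, dotProduct_sub, Matrix.smul_mulVec, dotProduct_smul,
        smul_eq_mul]
      ring
    rw [e]
    exact add_pos_of_nonneg_of_pos h1 (mul_pos hc h2)

lemma inv_antitone {X Y : Matrix (Fin n) (Fin n) ℝ} (hX : X.PosDef) (hY : Y.PosDef)
    (h : LoewnerLE X Y) : LoewnerLE Y⁻¹ X⁻¹ := by
  have hXd := hX.det_pos.ne'.isUnit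
  have hYd := hY.det_pos.ne'.isUnit
  have hPX : X⁻¹ * X = 1 := Matrix.nonsing_inv_mul X hXd
  have hXP : X * X⁻¹ = 1 := Matrix.mul_nonsing_inv X hXd
  have hQY : Y⁻¹ * Y = 1 := Matrix.nonsing_inv_mul Y hYd
  have hXsym : X⁻¹ᵀ = X⁻¹ := by
    rw [Matrix.transpose_nonsing_inv]
    rw [← Matrix.conjTranspose_eq_transpose_of_trivial, hX.1.eq]
  have hYsym : Y⁻¹ᵀ = Y⁻¹ := by
    rw [Matrix.transpose_nonsing_inv]
    rw [← Matrix.conjTranspose_eq_transpose_of_trivial, hY.1.eq]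
  have key : (X⁻¹ - Y⁻¹) * X * (X⁻¹ - Y⁻¹) + Y⁻¹ * (Y - X) * Y⁻¹ = X⁻¹ - Y⁻¹ := by
    simp only [Matrix.sub_mul, Matrix.mul_sub]
    rw [hPX, hQY, Matrix.mul_assoc Y⁻¹ X X⁻¹, hXP]
    simp only [Matrix.one_mul, Matrix.mul_one]
    abel
  have p1 : ((X⁻¹ - Y⁻¹) * X * (X⁻¹ - Y⁻¹)).PosSemidef := by
    have := hX.posSemidef.mul_mul_conjTranspose_same (X⁻¹ - Y⁻¹)
    rwa [conjTranspose_eq_transpose_of_trivial, Matrix.transpose_sub, hXsym, hYsym] at this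
  have p2 : (Y⁻¹ * (Y - X) * Y⁻¹).PosSemidef := by
    have := h.mul_mul_conjTranspose_same Y⁻¹
    rwa [conjTranspose_eq_transpose_of_trivial, hYsym] at this
  unfold LoewnerLE
  rw [← key]
  exact p1.add p2

lemma approx_inv {α : ℝ} {X Y : Matrix (Fin n) (Fin n) ℝ} (hX : X.PosDef) (hY : Y.PosDef)
    (h : ApproxA α X Y) : ApproxA α X⁻¹ Y⁻¹ := by
  have hXd := hX.det_pos.ne'.isUnit
  have einv : ∀ c : ℝ, 0 < c → (c • X)⁻¹ = c⁻¹ • X⁻¹ := by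
    intro c hc
    apply Matrix.inv_eq_right_inv
    rw [Algebra.smul_mul_assoc, Algebra.mul_smul_comm, smul_smul, Matrix.mul_nonsing_inv X hXd,
      mul_inv_cancel₀ hc.ne', one_smul]
  constructor
  · -- e^{-α} • X⁻¹ ⪯ Y⁻¹, from Y ⪯ e^{α} • X
    have h2 := inv_antitone hY (pd_smul hX (Real.exp_pos α)) h.2
    rwa [einv _ (Real.exp_pos α), ← Real.exp_neg] at h2
  · -- Y⁻¹ ⪯ e^{α} • X⁻¹, from e^{-α} • X ⪯ Y
    have h2 := inv_antitone (pd_smul hX (Real.exp_pos (-α))) hY h.1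
    rwa [einv _ (Real.exp_pos (-α)), ← Real.exp_neg, neg_neg] at h2

lemma approx_trans {α β : ℝ} {X Y W : Matrix (Fin n) (Fin n) ℝ}
    (h1 : ApproxA α X Y) (h2 : ApproxA β Y W) : ApproxA (α + β) X W := by
  constructor
  · have e : W - Real.exp (-(α+β)) • X =
        (W - Real.exp (-β) • Y) + Real.exp (-β) • (Y - Real.exp (-α) • X) := by
      rw [smul_sub, smul_smul, ← Real.exp_add, show -β + -α = -(α+β) by ring]
      abel
    unfold LoewnerLE
    rw [e]
    exact h2.1.add (psd_smul h1.1 (Real.exp_nonneg _))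
  · have e : Real.exp (α+β) • X - W =
        Real.exp β • (Real.exp α • X - Y) + (Real.exp β • Y - W) := by
      rw [smul_sub, smul_smul, ← Real.exp_add, show β + α = α + β by ring]
      abel
    unfold LoewnerLE
    rw [e]
    exact (psd_smul h1.2 (Real.exp_nonneg _)).add h2.2

lemma approx_congr {α : ℝ} {X Y C : Matrix (Fin n) (Fin n) ℝ} (h : ApproxA α X Y) :
    ApproxA α (C * X * Cᵀ) (C * Y * Cᵀ) := by
  constructor
  · have := loe_congr (C := C) h.1
    rwa [Algebra.mul_smul_comm, Algebra.smul_mul_assoc] at this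
  · have := loe_congr (C := C) h.2
    rwa [Algebra.mul_smul_comm, Algebra.smul_mul_assoc] at this

lemma approx_add {α : ℝ} (hα : 0 ≤ α) {X Y W : Matrix (Fin n) (Fin n) ℝ}
    (hW : W.PosSemidef) (h : ApproxA α X Y) : ApproxA α (X + W) (Y + W) := by
  have h1 : Real.exp (-α) ≤ 1 := Real.exp_le_one_iff.mpr (by linarith)
  have h2 : 1 ≤ Real.exp α := Real.one_le_exp hα
  constructor
  · have e : (Y + W) - Real.exp (-α) • (X + W) =
        (Y - Real.exp (-α) • X) + (1 - Real.exp (-α)) • W := by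
      rw [smul_add, sub_smul, one_smul]; abel
    unfold LoewnerLE
    rw [e]
    exact h.1.add (psd_smul hW (by linarith))
  · have e : Real.exp α • (X + W) - (Y + W) =
        (Real.exp α • X - Y) + (Real.exp α - 1) • W := by
      rw [smul_add, sub_smul, one_smul]; abel
    unfold LoewnerLE
    rw [e]
    exact h.2.add (psd_smul hW (by linarith))

lemma approx_smul {α : ℝ} {c : ℝ} (hc : 0 ≤ c) {X Y : Matrix (Fin n) (Fin n) ℝ}
    (h : ApproxA α X Y) : ApproxA α (c • X) (c • Y) := by
  constructor
  · have e : c • Y - Real.exp (-α) • (c • X) = c • (Y - Real.exp (-α) • X) := by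
      rw [smul_sub, smul_comm]
    unfold LoewnerLE
    rw [e]
    exact psd_smul h.1 hc
  · have e : Real.exp α • (c • X) - c • Y = c • (Real.exp α • X - Y) := by
      rw [smul_sub, smul_comm]
    unfold LoewnerLE
    rw [e]
    exact psd_smul h.2 hc

lemma half_identity {Dm Am : Matrix (Fin n) (Fin n) ℝ} (hD : IsUnit Dm.det)
    (hS : IsUnit (Dm - Am * Dm⁻¹ * Am).det) :
    (Dm - Am)⁻¹ = (1/2 : ℝ) •
      (Dm⁻¹ + (1 + Dm⁻¹ * Am) * (Dm - Am * Dm⁻¹ * Am)⁻¹ * (1 + Am * Dm⁻¹)) := by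
  have hDD : Dm * Dm⁻¹ = 1 := Matrix.mul_nonsing_inv Dm hD
  have hSS : (Dm - Am * Dm⁻¹ * Am) * (Dm - Am * Dm⁻¹ * Am)⁻¹ = 1 :=
    Matrix.mul_nonsing_inv _ hS
  have h1 : (Dm - Am) * (1 + Dm⁻¹ * Am) = Dm - Am * Dm⁻¹ * Am := by
    rw [Matrix.mul_add, Matrix.mul_one, Matrix.sub_mul, ← Matrix.mul_assoc, ← Matrix.mul_assoc,
      hDD, Matrix.one_mul]
    abel
  apply Matrix.inv_eq_right_inv
  rw [Algebra.mul_smul_comm, Matrix.mul_add, ← Matrix.mul_assoc, ← Matrix.mul_assoc, h1, hSS,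
    Matrix.one_mul, Matrix.sub_mul, hDD]
  have e : (1 - Am * Dm⁻¹) + (1 + Am * Dm⁻¹) = (2:ℝ) • (1 : Matrix (Fin n) (Fin n) ℝ) := by
    rw [two_smul]; abel
  rw [e, smul_smul]
  norm_num

end Stmt7Aux

open Stmt7Aux

/-- Given an inverse approximated chain, the operator `Z₀` defined by the
ParallelRSolve recursion satisfies `Z₀ ≈_{∑ εᵢ} M₀⁻¹`. -/
theorem stmt7 {n : ℕ} (d : ℕ)
    (D A : ℕ → Matrix (Fin n) (Fin n) ℝ) (ε : ℕ → ℝ)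
    (Z : ℕ → Matrix (Fin n) (Fin n) ℝ)
    (hSDDM : ∀ i ≤ d, IsSDDM (D i - A i))
    (hDdiag : ∀ i ≤ d, ∃ f : Fin n → ℝ, (∀ k, 0 < f k) ∧ D i = Matrix.diagonal f)
    (hAsym : ∀ i ≤ d, (A i)ᵀ = A i ∧ ∀ k l, 0 ≤ A i k l)
    (hεpos : ∀ i ≤ d, 0 ≤ ε i)
    (hchain1 : ∀ i, 1 ≤ i → i ≤ d →
      ApproxA (ε (i-1)) (D i - A i) (D (i-1) - A (i-1) * (D (i-1))⁻¹ * A (i-1)))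
    (hchain2 : ∀ i, 1 ≤ i → i ≤ d → ApproxA (ε (i-1)) (D i) (D (i-1)))
    (hchain3 : ApproxA (ε d) (D d) (D d - A d))
    (hZd : Z d = (D d)⁻¹)
    (hZ : ∀ i < d, Z i = (1/2 : ℝ) •
      ((D i)⁻¹ + (1 + (D i)⁻¹ * A i) * Z (i+1) * (1 + A i * (D i)⁻¹))) :
    ApproxA (∑ i ∈ Finset.range (d+1), ε i) (Z 0) ((D 0 - A 0)⁻¹) := by
  classical
  have hMpd : ∀ i ≤ d, (D i - A i).PosDef := fun i hi => (hSDDM i hi).1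
  have hDpd : ∀ i ≤ d, (D i).PosDef := by
    intro i hi
    obtain ⟨f, hf, hDf⟩ := hDdiag i hi
    rw [hDf]
    exact Matrix.posDef_diagonal_iff.mpr hf
  have hDsym : ∀ i ≤ d, (D i)ᵀ = D i := by
    intro i hi
    obtain ⟨f, hf, hDf⟩ := hDdiag i hi
    rw [hDf, Matrix.diagonal_transpose]
  have hDinvsym : ∀ i ≤ d, ((D i)⁻¹)ᵀ = (D i)⁻¹ := by
    intro i hi
    rw [Matrix.transpose_nonsing_inv, hDsym i hi]
  have hSsym : ∀ i ≤ d, (D i - A i * (D i)⁻¹ * A i)ᵀ = D i - A i * (D i)⁻¹ * A i := by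
    intro i hi
    rw [Matrix.transpose_sub, hDsym i hi, Matrix.transpose_mul, Matrix.transpose_mul,
      hDinvsym i hi, (hAsym i hi).1, ← Matrix.mul_assoc]
  have hCt : ∀ i ≤ d, (1 + (D i)⁻¹ * A i)ᵀ = 1 + A i * (D i)⁻¹ := by
    intro i hi
    rw [Matrix.transpose_add, Matrix.transpose_one, Matrix.transpose_mul, (hAsym i hi).1,
      hDinvsym i hi]
  have key : ∀ k i, i + k = d →
      ApproxA (∑ j ∈ Finset.Icc i d, ε j) (Z i) ((D i - A i)⁻¹) := by
    intro k
    induction k with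
    | zero =>
      intro i hi
      have hid : i = d := by omega
      subst hid
      rw [Finset.Icc_self, Finset.sum_singleton, hZd]
      exact approx_inv (hDpd i le_rfl) (hMpd i le_rfl) hchain3
    | succ k ih =>
      intro i hi
      have hi1 : i + 1 ≤ d := by omega
      have hid : i ≤ d := by omega
      have IH := ih (i+1) (by omega)
      have h1 := hchain1 (i+1) (by omega) (by omega)
      rw [Nat.add_sub_cancel] at h1
      have hSpd : (D i - A i * (D i)⁻¹ * A i).PosDef :=
        posdef_of_loe (Real.exp_pos _) (hMpd (i+1) hi1) (hSsym i hid) h1.1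
      have h2 := approx_inv (hMpd (i+1) hi1) hSpd h1
      have h3 := approx_trans IH h2
      have h4 := approx_congr (C := 1 + (D i)⁻¹ * A i) h3
      rw [hCt i hid] at h4
      have hα : 0 ≤ (∑ j ∈ Finset.Icc (i+1) d, ε j) + ε i := by
        have : 0 ≤ ∑ j ∈ Finset.Icc (i+1) d, ε j :=
          Finset.sum_nonneg fun j hj => hεpos j (Finset.mem_Icc.mp hj).2
        have := hεpos i hid
        linarith
      have h5 := approx_add hα ((hDpd i hid).inv.posSemidef) h4
      have h6 := approx_smul (by norm_num : (0:ℝ) ≤ 1/2) h5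
      have hidy : (D i - A i)⁻¹ = (1/2 : ℝ) •
          ((D i)⁻¹ + (1 + (D i)⁻¹ * A i) * (D i - A i * (D i)⁻¹ * A i)⁻¹ *
            (1 + A i * (D i)⁻¹)) :=
        half_identity (hDpd i hid).det_pos.ne'.isUnit hSpd.det_pos.ne'.isUnit
      have hsum : ∑ j ∈ Finset.Icc i d, ε j = ε i + ∑ j ∈ Finset.Icc (i+1) d, ε j := by
        rw [show Finset.Icc i d = insert i (Finset.Icc (i+1) d) from Finset.ext fun x => by
          simp only [Finset.mem_insert, Finset.mem_Icc]; omega,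
          Finset.sum_insert (by simp [Finset.mem_Icc])]
      rw [hsum, add_comm, hZ i (by omega), hidy]
      have e1 : (1 + (D i)⁻¹ * A i) * Z (i+1) * (1 + A i * (D i)⁻¹) + (D i)⁻¹ =
          (D i)⁻¹ + (1 + (D i)⁻¹ * A i) * Z (i+1) * (1 + A i * (D i)⁻¹) := by abel
      have e2 : (1 + (D i)⁻¹ * A i) * (D i - A i * (D i)⁻¹ * A i)⁻¹ * (1 + A i * (D i)⁻¹)
            + (D i)⁻¹ =
          (D i)⁻¹ + (1 + (D i)⁻¹ * A i) * (D i - A i * (D i)⁻¹ * A i)⁻¹ *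
            (1 + A i * (D i)⁻¹) := by abel
      rw [e1, e2] at h6
      exact h6
  have hfin := key d 0 (by omega)
  have : Finset.Icc 0 d = Finset.range (d+1) := Finset.ext fun x => by
    simp [Finset.mem_Icc, Finset.mem_range, Nat.lt_succ_iff]
  rwa [this] at hfin
end

section
/- Let M₀ = D₀ − A₀ be an SDDM matrix with standard splitting and condition number κ. If d = ⌈log₂(2 ln(2^{1/3}/(2^{1/3} − 1)) κ)⌉, then D₀ ≈_{ε_d} D₀ − D₀(D₀⁻¹A₀)^{2^d} with ε_d < (1/3) ln 2. -/
open Matrix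

lemma aux_psd_smul {n : ℕ} {X : Matrix (Fin n) (Fin n) ℝ} (hX : X.PosSemidef)
    {a : ℝ} (ha : 0 ≤ a) : (a • X).PosSemidef := by
  refine Matrix.PosSemidef.of_dotProduct_mulVec_nonneg ?_ fun x => ?_
  · unfold Matrix.IsHermitian
    rw [Matrix.conjTranspose_smul, hX.1]
    simp
  · rw [Matrix.smul_mulVec, dotProduct_smul, smul_eq_mul]
    exact mul_nonneg ha (by simpa using hX.dotProduct_mulVec_nonneg x)

lemma smul_one_psd {n : ℕ} {a : ℝ} (ha : 0 ≤ a) :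
    (a • (1 : Matrix (Fin n) (Fin n) ℝ)).PosSemidef :=
  aux_psd_smul Matrix.PosSemidef.one ha

open scoped MatrixOrder in
lemma aux_smul_sub_sq {n : ℕ} {Y : Matrix (Fin n) (Fin n) ℝ} (hY : Y.PosSemidef)
    {a : ℝ} (h : (a • 1 - Y).PosSemidef) : (a • Y - Y ^ 2).PosSemidef := by
  obtain ⟨X, hX, -, hXY⟩ := CFC.exists_sqrt_of_isSelfAdjoint_of_quasispectrumRestricts
    hY.isHermitian (QuasispectrumRestricts.nnreal_of_nonneg hY.nonneg)
  have hXX : X * X = Y := hXY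
  have hkey : X * (a • 1 - Y) * Xᴴ = a • Y - Y ^ 2 := by
    rw [show Xᴴ = X from hX]
    rw [Matrix.mul_sub, Matrix.sub_mul, Matrix.mul_smul, Matrix.smul_mul, mul_one,
      hXX]
    congr 1
    calc X * Y * X = X * (X * X) * X := by rw [hXX]
    _ = (X * X) * (X * X) := by noncomm_ring
    _ = Y ^ 2 := by rw [hXX, pow_two]
  have := h.mul_mul_conjTranspose_same X
  rwa [hkey] at this

lemma aux_sq_le {n : ℕ} {Y : Matrix (Fin n) (Fin n) ℝ} (hY : Y.PosSemidef)
    {a : ℝ} (ha : 0 ≤ a) (h : (a • 1 - Y).PosSemidef) :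
    ((a ^ 2) • 1 - Y ^ 2).PosSemidef := by
  have h1 := aux_smul_sub_sq hY h
  have h2 : ((a ^ 2) • (1 : Matrix (Fin n) (Fin n) ℝ) - a • Y).PosSemidef := by
    have he : (a ^ 2) • (1 : Matrix (Fin n) (Fin n) ℝ) - a • Y = a • (a • 1 - Y) := by
      rw [smul_sub, smul_smul, pow_two]
    rw [he]; exact aux_psd_smul h ha
  have hsum := h1.add h2
  have he : a • Y - Y ^ 2 + ((a ^ 2) • 1 - a • Y) = (a ^ 2) • 1 - Y ^ 2 := by abel
  rwa [he] at hsum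

/-- If `-ρ•1 ⪯ B ⪯ ρ•1` with `B` hermitian, then `B^(2^k)` is PSD and `⪯ ρ^(2^k)•1`
for `k ≥ 1`. -/
lemma aux_pow_bound {n : ℕ} {B : Matrix (Fin n) (Fin n) ℝ} (hB : B.IsHermitian)
    {ρ : ℝ} (hρ : 0 ≤ ρ) (h1 : (ρ • 1 - B).PosSemidef) (h2 : (ρ • 1 + B).PosSemidef) :
    ∀ k : ℕ, 1 ≤ k → (B ^ (2 ^ k)).PosSemidef ∧
      ((ρ ^ (2 ^ k)) • 1 - B ^ (2 ^ k)).PosSemidef := by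
  have base : (B ^ 2).PosSemidef ∧ ((ρ ^ 2) • (1:Matrix (Fin n) (Fin n) ℝ) - B ^ 2).PosSemidef := by
    constructor
    · have := Matrix.posSemidef_conjTranspose_mul_self B
      rwa [hB.eq, ← pow_two] at this
    · have key := aux_smul_sub_sq h1 (by
        have he : (2 * ρ) • (1 : Matrix (Fin n) (Fin n) ℝ) - (ρ • 1 - B) = ρ • 1 + B := by
          rw [two_mul, add_smul]; abel
        rw [he]; exact h2)
      have he : (2 * ρ) • (ρ • 1 - B) - (ρ • 1 - B) ^ 2 =
          (ρ ^ 2) • (1 : Matrix (Fin n) (Fin n) ℝ) - B ^ 2 := by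
        simp only [pow_two, Matrix.mul_sub, Matrix.sub_mul, Matrix.smul_mul,
          Matrix.mul_smul, smul_smul, smul_sub, one_mul, mul_one]
        module
      rwa [he] at key
  intro k hk
  induction k, hk using Nat.le_induction with
  | base => simpa using base
  | succ m hm ih =>
      obtain ⟨ihp, ihb⟩ := ih
      have e1 : B ^ (2 ^ (m+1)) = (B ^ (2 ^ m)) ^ 2 := by rw [← pow_mul, pow_succ]
      have e2 : ρ ^ (2 ^ (m+1)) = (ρ ^ (2 ^ m)) ^ 2 := by rw [← pow_mul, pow_succ]
      refine ⟨?_, ?_⟩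
      · rw [e1]; exact ihp.pow 2
      · rw [e1, e2]; exact aux_sq_le ihp (pow_nonneg hρ _) ihb

set_option maxHeartbeats 2000000 in
/-- For an SDDM matrix `M₀ = D₀ − A₀` with condition number `κ`, taking
`d = ⌈log₂(2 ln(2^{1/3}/(2^{1/3} − 1)) κ)⌉` gives
`D₀ ≈_{ε_d} D₀ − D₀(D₀⁻¹A₀)^{2^d}` with `ε_d < (1/3) ln 2`. -/
theorem stmt8 {n : ℕ} (M₀ D₀ A₀ : Matrix (Fin n) (Fin n) ℝ)
    (hM : IsSDDM M₀)
    (hD : D₀ = Matrix.diagonal (fun i => M₀ i i))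
    (hA : A₀ = D₀ - M₀)
    (lammin lammax κ : ℝ) (hlammin : 0 < lammin)
    (hlo : (M₀ - lammin • (1 : Matrix (Fin n) (Fin n) ℝ)).PosSemidef)
    (hhi : ((lammax • (1 : Matrix (Fin n) (Fin n) ℝ)) - M₀).PosSemidef)
    (hκ : κ = lammax / lammin)
    (d : ℕ)
    (hd : d = ⌈Real.logb 2
      (2 * Real.log ((2:ℝ) ^ ((1:ℝ)/3) / ((2:ℝ) ^ ((1:ℝ)/3) - 1)) * κ)⌉₊) :
    ∃ εd : ℝ, εd < (1/3) * Real.log 2 ∧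
      ApproxA εd D₀ (D₀ - D₀ * (D₀⁻¹ * A₀) ^ (2 ^ d)) := by
  have hlog2 : 0 < Real.log 2 := Real.log_pos (by norm_num)
  -- trivial case n = 0
  rcases Nat.eq_zero_or_pos n with hn | hn
  · subst hn
    have triv : ∀ X : Matrix (Fin 0) (Fin 0) ℝ, X.PosSemidef := fun X =>
      ⟨by ext i j; exact i.elim0, fun x => by simp [Subsingleton.elim x 0]⟩
    exact ⟨0, by linarith, triv _, triv _⟩
  -- main case
  classical
  set c : ℝ := (2:ℝ) ^ ((1:ℝ)/3) with hcdef
  have hc1 : 1 < c := by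
    rw [hcdef]
    exact (Real.one_lt_rpow_iff_of_pos (by norm_num)).mpr (Or.inl ⟨by norm_num, by norm_num⟩)
  have hc0 : 0 < c := lt_trans one_pos hc1
  have hcm1 : 0 < c - 1 := by linarith
  set C : ℝ := Real.log (c / (c - 1)) with hCdef
  have hc3 : c ^ (3:ℕ) = 2 := by
    rw [hcdef, ← Real.rpow_natCast ((2:ℝ) ^ ((1:ℝ)/3)) 3, ← Real.rpow_mul (by norm_num)]
    norm_num
  have hc43 : c < 4/3 := by nlinarith [hc3, sq_nonneg c, sq_nonneg (c - 4/3), sq_nonneg (c + 4/3)]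
  have hquot4 : 4 < c / (c - 1) := by
    rw [lt_div_iff₀ hcm1]; nlinarith
  have hC1 : 1 < C := by
    rw [hCdef]
    rw [Real.lt_log_iff_exp_lt (by positivity)]
    have := Real.exp_one_lt_d9
    calc Real.exp 1 < 2.7182818286 := this
    _ < 4 := by norm_num
    _ < c / (c - 1) := hquot4
  -- basic spectral facts
  obtain ⟨i0, _⟩ : ∃ i : Fin n, True := ⟨⟨0, hn⟩, trivial⟩
  have hqform : ∀ (X : Matrix (Fin n) (Fin n) ℝ) (hX : X.PosSemidef) (i : Fin n),
      0 ≤ X i i := by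
    intro X hX i
    have := hX.dotProduct_mulVec_nonneg (Pi.single i 1)
    simpa [dotProduct, mulVec, Pi.single_apply, Finset.sum_ite_eq, Finset.sum_ite_eq'] using this
  have hdle : ∀ i, M₀ i i ≤ lammax := by
    intro i
    have := hqform _ hhi i
    have h1 : (lammax • (1 : Matrix (Fin n) (Fin n) ℝ) - M₀) i i = lammax - M₀ i i := by
      simp [Matrix.sub_apply, Matrix.smul_apply, Matrix.one_apply_eq]
    linarith [h1 ▸ this]
  have hdge : ∀ i, lammin ≤ M₀ i i := by
    intro i
    have := hqform _ hlo i
    have h1 : (M₀ - lammin • (1 : Matrix (Fin n) (Fin n) ℝ)) i i = M₀ i i - lammin := by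
      simp [Matrix.sub_apply, Matrix.smul_apply, Matrix.one_apply_eq]
    linarith [h1 ▸ this]
  have hminmax : lammin ≤ lammax := le_trans (hdge i0) (hdle i0)
  have hlammax : 0 < lammax := lt_of_lt_of_le hlammin hminmax
  have hdpos : ∀ i, 0 < M₀ i i := fun i => lt_of_lt_of_le hlammin (hdge i)
  set r : ℝ := lammin / lammax with hrdef
  have hr0 : 0 < r := div_pos hlammin hlammax
  have hr1 : r ≤ 1 := by rw [hrdef, div_le_one hlammax]; exact hminmax
  set ρ : ℝ := 1 - r with hρdef
  have hρ0 : 0 ≤ ρ := by linarith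
  have hrκ : r * κ = 1 := by
    rw [hrdef, hκ]; field_simp
  have hκ1 : 1 ≤ κ := by
    rw [hκ, le_div_iff₀ hlammin]; linarith
  -- the diagonal square root matrices
  set s : Fin n → ℝ := fun i => Real.sqrt (M₀ i i) with hsdef
  have hspos : ∀ i, 0 < s i := fun i => Real.sqrt_pos.mpr (hdpos i)
  have hss : ∀ i, s i * s i = M₀ i i := fun i => Real.mul_self_sqrt (hdpos i).le
  set S : Matrix (Fin n) (Fin n) ℝ := Matrix.diagonal s with hSdef
  set T : Matrix (Fin n) (Fin n) ℝ := Matrix.diagonal (fun i => (s i)⁻¹) with hTdef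
  have hSh : Sᴴ = S := by
    rw [hSdef, Matrix.diagonal_conjTranspose]
    congr
  have hTh : Tᴴ = T := by
    rw [hTdef, Matrix.diagonal_conjTranspose]
    congr
  have hST : S * T = 1 := by
    rw [hSdef, hTdef, Matrix.diagonal_mul_diagonal]
    have : (fun i => s i * (s i)⁻¹) = fun _ : Fin n => (1:ℝ) :=
      funext fun i => mul_inv_cancel₀ (hspos i).ne'
    rw [this, Matrix.diagonal_one]
  have hTS : T * S = 1 := by
    rw [hTdef, hSdef, Matrix.diagonal_mul_diagonal]
    have : (fun i => (s i)⁻¹ * s i) = fun _ : Fin n => (1:ℝ) :=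
      funext fun i => inv_mul_cancel₀ (hspos i).ne'
    rw [this, Matrix.diagonal_one]
  have hSS : S * S = D₀ := by
    rw [hSdef, Matrix.diagonal_mul_diagonal, hD]
    rw [show (fun i => s i * s i) = fun i => M₀ i i from funext hss]
  have hTDT : T * D₀ * T = 1 := by
    rw [hTdef, hD, Matrix.diagonal_mul_diagonal, Matrix.diagonal_mul_diagonal]
    have : (fun i => (s i)⁻¹ * M₀ i i * (s i)⁻¹) = fun _ : Fin n => (1:ℝ) := by
      funext i
      rw [← hss i]
      field_simp
      rw [div_self (hspos i).ne']
    rw [this, Matrix.diagonal_one]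
  have hDinv : D₀⁻¹ = T * T := by
    apply Matrix.inv_eq_right_inv
    rw [hD, hTdef, Matrix.diagonal_mul_diagonal, Matrix.diagonal_mul_diagonal]
    have : (fun i => M₀ i i * ((s i)⁻¹ * (s i)⁻¹)) = fun _ : Fin n => (1:ℝ) := by
      funext i
      rw [← hss i]
      field_simp
      rw [div_self (hspos i).ne']
    rw [this, Matrix.diagonal_one]
  -- the normalized matrix B
  set B : Matrix (Fin n) (Fin n) ℝ := T * A₀ * T with hBdef
  have hMh : M₀ᴴ = M₀ := hM.1.1
  have hDh : D₀ᴴ = D₀ := by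
    rw [hD, Matrix.diagonal_conjTranspose]; congr
  have hAh : A₀ᴴ = A₀ := by rw [hA, Matrix.conjTranspose_sub, hDh, hMh]
  have hBh : B.IsHermitian := by
    unfold Matrix.IsHermitian
    rw [hBdef, Matrix.conjTranspose_mul, Matrix.conjTranspose_mul, hTh, hAh, mul_assoc]
  have hTAT : T * M₀ * T = 1 - B := by
    have hM' : M₀ = D₀ - A₀ := by rw [hA]; abel
    rw [hM', Matrix.mul_sub, Matrix.sub_mul, hTDT, hBdef]
  have hTDAT : T * (D₀ + A₀) * T = 1 + B := by
    rw [Matrix.mul_add, Matrix.add_mul, hTDT, hBdef]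
  -- power conjugation identity
  have hpow : ∀ k : ℕ, (D₀⁻¹ * A₀) ^ k = T * B ^ k * S := by
    intro k
    induction k with
    | zero => simpa using hTS.symm
    | succ m ih =>
        rw [pow_succ, ih, pow_succ]
        rw [hDinv, hBdef]
        calc T * B ^ m * S * (T * T * A₀)
            = T * B ^ m * (S * T) * (T * A₀) := by noncomm_ring
          _ = T * B ^ m * (T * A₀) := by rw [hST, mul_one]
          _ = T * (B ^ m * (T * A₀ * T)) * S := by
              rw [hBdef]
              calc T * B ^ m * (T * A₀) = T * (B ^ m * (T * A₀ * (T * S))) := by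
                    rw [hTS, mul_one]; noncomm_ring
                _ = T * (B ^ m * (T * A₀ * T)) * S := by noncomm_ring
          _ = T * (B ^ m * B) * S := by rw [hBdef]
  have hDpow : ∀ k : ℕ, D₀ * (D₀⁻¹ * A₀) ^ k = S * B ^ k * S := by
    intro k
    rw [hpow k, ← hSS]
    calc S * S * (T * B ^ k * S) = S * ((S * T) * (B ^ k * S)) := by noncomm_ring
      _ = S * (B ^ k * S) := by rw [hST, one_mul]
      _ = S * B ^ k * S := by rw [mul_assoc]
  -- the diagonal correction term
  have hdiagpsd : (lammin • (1:Matrix (Fin n) (Fin n) ℝ) - r • D₀).PosSemidef := by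
    have he : lammin • (1:Matrix (Fin n) (Fin n) ℝ) - r • D₀ =
        Matrix.diagonal (fun i => lammin - r * M₀ i i) := by
      rw [hD, ← Matrix.diagonal_one]
      ext i j
      by_cases h : i = j
      · subst h
        simp [Matrix.sub_apply, Matrix.smul_apply, Matrix.diagonal_apply_eq,
          Matrix.one_apply_eq]
      · simp [Matrix.sub_apply, Matrix.smul_apply, Matrix.diagonal_apply_ne _ h,
          Matrix.one_apply_ne h]
    rw [he]
    refine Matrix.PosSemidef.diagonal fun i => ?_
    have : r * M₀ i i ≤ r * lammax := by
      exact mul_le_mul_of_nonneg_left (hdle i) hr0.le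
    have hrl : r * lammax = lammin := by rw [hrdef]; field_simp
    show (0:ℝ) ≤ lammin - r * M₀ i i
    linarith
  -- D₀ + A₀ ⪰ lammin • 1  (the quadratic-form argument with absolute values)
  have hDA : (D₀ + A₀ - lammin • (1:Matrix (Fin n) (Fin n) ℝ)).PosSemidef := by
    refine Matrix.PosSemidef.of_dotProduct_mulVec_nonneg ?_ ?_
    · unfold Matrix.IsHermitian
      rw [Matrix.conjTranspose_sub, Matrix.conjTranspose_add, hDh, hAh,
        Matrix.conjTranspose_smul, Matrix.conjTranspose_one]
      congr
    · intro x
      have h0 := hlo.dotProduct_mulVec_nonneg (fun i => |x i|)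
      simp only [star_trivial] at h0 ⊢
      refine le_trans h0 ?_
      simp only [dotProduct, mulVec]
      refine Finset.sum_le_sum fun i _ => ?_
      rw [Finset.mul_sum, Finset.mul_sum]
      refine Finset.sum_le_sum fun j _ => ?_
      by_cases hij : i = j
      · subst hij
        have e1 : (M₀ - lammin • (1:Matrix (Fin n) (Fin n) ℝ)) i i = M₀ i i - lammin := by
          simp [Matrix.sub_apply, Matrix.smul_apply, Matrix.one_apply_eq]
        have e2 : (D₀ + A₀ - lammin • (1:Matrix (Fin n) (Fin n) ℝ)) i i = M₀ i i - lammin := by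
          rw [hA, hD]
          simp [Matrix.sub_apply, Matrix.add_apply, Matrix.smul_apply, Matrix.one_apply_eq,
            Matrix.diagonal_apply_eq]
        rw [e1, e2]
        have : |x i| * ((M₀ i i - lammin) * |x i|) = (M₀ i i - lammin) * (x i * x i) := by
          rw [← abs_mul_abs_self (x i)]; ring
        rw [this]
        ring_nf
        nlinarith [abs_mul_abs_self (x i)]
      · have e1 : (M₀ - lammin • (1:Matrix (Fin n) (Fin n) ℝ)) i j = M₀ i j := by
          simp [Matrix.sub_apply, Matrix.smul_apply, Matrix.one_apply_ne hij]
        have e2 : (D₀ + A₀ - lammin • (1:Matrix (Fin n) (Fin n) ℝ)) i j = -(M₀ i j) := by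
          rw [hA, hD]
          simp [Matrix.sub_apply, Matrix.add_apply, Matrix.smul_apply, Matrix.one_apply_ne hij,
            Matrix.diagonal_apply_ne _ hij]
        rw [e1, e2]
        have hMij : M₀ i j ≤ 0 := hM.2.1 i j hij
        have habs : |x i| * |x j| = |x i * x j| := (abs_mul _ _).symm
        have h1 : -(x i * x j) ≤ |x i * x j| := neg_le_abs _
        nlinarith [abs_nonneg (x i * x j)]
  -- the two-sided bound on B
  have hbd1 : (ρ • (1:Matrix (Fin n) (Fin n) ℝ) - B).PosSemidef := by
    have hsum : ((M₀ - lammin • (1:Matrix (Fin n) (Fin n) ℝ)) +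
        (lammin • (1:Matrix (Fin n) (Fin n) ℝ) - r • D₀)).PosSemidef := hlo.add hdiagpsd
    have := hsum.mul_mul_conjTranspose_same T
    rw [hTh] at this
    have he : T * ((M₀ - lammin • (1:Matrix (Fin n) (Fin n) ℝ)) +
        (lammin • (1:Matrix (Fin n) (Fin n) ℝ) - r • D₀)) * T =
        ρ • (1:Matrix (Fin n) (Fin n) ℝ) - B := by
      have he2 : (M₀ - lammin • (1:Matrix (Fin n) (Fin n) ℝ)) +
          (lammin • (1:Matrix (Fin n) (Fin n) ℝ) - r • D₀) = M₀ - r • D₀ := by abel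
      rw [he2, Matrix.mul_sub, Matrix.sub_mul, Matrix.mul_smul, Matrix.smul_mul,
        hTAT, hTDT, hρdef, sub_smul, one_smul]
      abel
    rwa [he] at this
  have hbd2 : (ρ • (1:Matrix (Fin n) (Fin n) ℝ) + B).PosSemidef := by
    have hsum : ((D₀ + A₀ - lammin • (1:Matrix (Fin n) (Fin n) ℝ)) +
        (lammin • (1:Matrix (Fin n) (Fin n) ℝ) - r • D₀)).PosSemidef := hDA.add hdiagpsd
    have := hsum.mul_mul_conjTranspose_same T
    rw [hTh] at this
    have he : T * ((D₀ + A₀ - lammin • (1:Matrix (Fin n) (Fin n) ℝ)) +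
        (lammin • (1:Matrix (Fin n) (Fin n) ℝ) - r • D₀)) * T =
        ρ • (1:Matrix (Fin n) (Fin n) ℝ) + B := by
      have he2 : (D₀ + A₀ - lammin • (1:Matrix (Fin n) (Fin n) ℝ)) +
          (lammin • (1:Matrix (Fin n) (Fin n) ℝ) - r • D₀) = (D₀ + A₀) - r • D₀ := by abel
      rw [he2, Matrix.mul_sub, Matrix.sub_mul, Matrix.mul_smul, Matrix.smul_mul,
        hTDAT, hTDT, hρdef, sub_smul, one_smul]
      abel
    rwa [he] at this
  -- numerics
  have hargpos : (0:ℝ) < 2 * C * κ := by nlinarith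
  have harg1 : (1:ℝ) < 2 * C * κ := by nlinarith
  have hd1 : 1 ≤ d := by
    rw [hd]
    rw [Nat.one_le_iff_ne_zero, ← Nat.pos_iff_ne_zero, Nat.ceil_pos]
    exact Real.logb_pos (by norm_num) harg1
  have hNge : 2 * C * κ ≤ ((2 ^ d : ℕ):ℝ) := by
    have h1 : Real.logb 2 (2 * C * κ) ≤ (d:ℝ) := by
      rw [hd]; exact Nat.le_ceil _
    calc 2 * C * κ = (2:ℝ) ^ Real.logb 2 (2 * C * κ) :=
          (Real.rpow_logb (by norm_num) (by norm_num) hargpos).symm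
      _ ≤ (2:ℝ) ^ (d:ℝ) := Real.rpow_le_rpow_of_exponent_le (by norm_num) h1
      _ = ((2 ^ d : ℕ):ℝ) := by
          rw [Real.rpow_natCast]
          push_cast
          ring
  have hρexp : ρ ^ (2 ^ d) ≤ Real.exp (-(2 * C)) := by
    have h1 : ρ ≤ Real.exp (-r) := by
      have := Real.add_one_le_exp (-r)
      rw [hρdef]; linarith
    have h2 : ρ ^ (2^d) ≤ Real.exp (-r) ^ (2^d) := pow_le_pow_left₀ hρ0 h1 _
    have h3 : Real.exp (-r) ^ (2^d) = Real.exp (-(r * ((2^d : ℕ):ℝ))) := by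
      rw [← Real.exp_nat_mul]
      ring_nf
    have h4 : 2 * C ≤ r * ((2^d : ℕ):ℝ) := by
      calc 2 * C = 2 * C * (r * κ) := by rw [hrκ]; ring
        _ = r * (2 * C * κ) := by ring
        _ ≤ r * ((2^d : ℕ):ℝ) := mul_le_mul_of_nonneg_left hNge hr0.le
    calc ρ ^ (2^d) ≤ Real.exp (-(r * ((2^d : ℕ):ℝ))) := h2.trans_eq h3
      _ ≤ Real.exp (-(2 * C)) := Real.exp_le_exp.mpr (by linarith)
  have hexpC : Real.exp C = c / (c - 1) := Real.exp_log (by positivity)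
  have hexp2C : Real.exp (-(2 * C)) = ((c-1)/c) * ((c-1)/c) := by
    rw [show -(2*C) = (-C) + (-C) by ring, Real.exp_add, Real.exp_neg, hexpC, inv_div]
  have hfrac0 : 0 < (c-1)/c := by positivity
  have hfrac1 : (c-1)/c < 1 := by rw [div_lt_one hc0]; linarith
  have hfinal : ρ ^ (2^d) < (c-1)/c := by
    calc ρ ^ (2^d) ≤ ((c-1)/c) * ((c-1)/c) := hρexp.trans_eq hexp2C
      _ < (c-1)/c := by nlinarith
  have ht0 : 0 ≤ ρ ^ (2^d) := pow_nonneg hρ0 _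
  have ht1 : ρ ^ (2^d) < 1 := lt_trans hfinal hfrac1
  have h1t : (0:ℝ) < 1 - ρ ^ (2^d) := by linarith
  refine ⟨-Real.log (1 - ρ ^ (2^d)), ?_, ?_, ?_⟩
  · -- εd < (1/3) log 2
    have hlogc : Real.log c = (1/3) * Real.log 2 := by
      rw [hcdef, Real.log_rpow (by norm_num)]
    rw [← hlogc]
    have hinv : -Real.log (1 - ρ ^ (2^d)) = Real.log (1 - ρ ^ (2^d))⁻¹ := by rw [Real.log_inv]
    rw [hinv]
    apply Real.log_lt_log (inv_pos.mpr h1t)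
    have hclt : 1 < c * (1 - ρ ^ (2^d)) := by
      have h5 : c * ρ ^ (2^d) < c - 1 := by
        have := mul_lt_mul_of_pos_left hfinal hc0
        rwa [mul_div_cancel₀ _ hc0.ne'] at this
      nlinarith
    rw [← one_div, div_lt_iff₀ h1t]
    linarith [hclt]
  · -- lower Loewner bound
    have hεexp : Real.exp (-(-Real.log (1 - ρ ^ (2^d)))) = 1 - ρ ^ (2^d) := by
      rw [neg_neg, Real.exp_log h1t]
    unfold LoewnerLE
    have hmain := (aux_pow_bound hBh hρ0 hbd1 hbd2 d hd1).2
    have := hmain.mul_mul_conjTranspose_same S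
    rw [hSh] at this
    have he : S * ((ρ ^ (2^d)) • (1:Matrix (Fin n) (Fin n) ℝ) - B ^ (2^d)) * S =
        D₀ - D₀ * (D₀⁻¹ * A₀) ^ (2^d) - Real.exp (-(-Real.log (1 - ρ ^ (2^d)))) • D₀ := by
      rw [hεexp, hDpow (2^d), Matrix.mul_sub, Matrix.sub_mul, Matrix.mul_smul, Matrix.smul_mul,
        mul_one, hSS, sub_smul, one_smul]
      abel
    rwa [he] at this
  · -- upper Loewner bound
    have hε0 : 0 ≤ -Real.log (1 - ρ ^ (2^d)) := by
      have : Real.log (1 - ρ ^ (2^d)) ≤ 0 := Real.log_nonpos (by linarith) (by linarith)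
      linarith
    have hexpge : 1 ≤ Real.exp (-Real.log (1 - ρ ^ (2^d))) := Real.one_le_exp hε0
    unfold LoewnerLE
    have hdiag : ((Real.exp (-Real.log (1 - ρ ^ (2^d))) - 1) •
        (1:Matrix (Fin n) (Fin n) ℝ)).PosSemidef := smul_one_psd (by linarith)
    have hBpow : (B ^ (2^d)).PosSemidef := (aux_pow_bound hBh hρ0 hbd1 hbd2 d hd1).1
    have hsum := hdiag.add hBpow
    have := hsum.mul_mul_conjTranspose_same S
    rw [hSh] at this
    have he : S * ((Real.exp (-Real.log (1 - ρ ^ (2^d))) - 1) • (1:Matrix (Fin n) (Fin n) ℝ)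
        + B ^ (2^d)) * S =
        Real.exp (-Real.log (1 - ρ ^ (2^d))) • D₀ - (D₀ - D₀ * (D₀⁻¹ * A₀) ^ (2^d)) := by
      rw [hDpow (2^d), Matrix.mul_add, Matrix.add_mul, Matrix.mul_smul, Matrix.smul_mul,
        mul_one, hSS, sub_smul, one_smul]
      abel
    rwa [he] at this
end

section
/- Let D be positive diagonal and A symmetric non-negative with D − A symmetric positive definite. Then the spectral radius of D⁻¹A is strictly less than 1, and for every positive integer m, the matrix D − D(D⁻¹A)^{2^m} is symmetric positive definite. -/
open Matrix

/-- Conjugation of a positive definite matrix by a matrix with trivial kernel. -/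
lemma myPosDef_conj {n : ℕ} {P : Matrix (Fin n) (Fin n) ℝ} (hP : P.PosDef)
    (B : Matrix (Fin n) (Fin n) ℝ) (hB : ∀ x, B *ᵥ x = 0 → x = 0) :
    (Bᴴ * P * B).PosDef := by
  refine Matrix.PosDef.of_dotProduct_mulVec_pos (isHermitian_conjTranspose_mul_mul B hP.1) fun x hx => ?_
  have hBx : B *ᵥ x ≠ 0 := fun h => hx (hB x h)
  simpa only [star_mulVec, dotProduct_mulVec, vecMul_vecMul] using hP.dotProduct_mulVec_pos hBx

lemma myConj_pow {n : ℕ} (U V C : Matrix (Fin n) (Fin n) ℝ) (hVU : V * U = 1)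
    (hUV : U * V = 1) (k : ℕ) :
    (U * C * V) ^ k = U * C ^ k * V := by
  induction k with
  | zero => rw [pow_zero, pow_zero, Matrix.mul_one, hUV]
  | succ k ih =>
    rw [pow_succ, pow_succ, ih]
    calc U * C ^ k * V * (U * C * V) = U * C ^ k * (V * U) * C * V := by
          simp only [Matrix.mul_assoc]
      _ = U * (C ^ k * C) * V := by rw [hVU]; simp only [Matrix.mul_assoc, Matrix.mul_one]
      _ = _ := by rw [Matrix.mul_assoc]

/-- If `D` is positive diagonal, `A` symmetric non-negative with zero diagonal, and
`D − A` is symmetric positive definite (SDDM), then the spectral radius of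
`D⁻¹A` is strictly less than 1, and for every positive integer `m`,
`D − D(D⁻¹A)^{2^m}` is symmetric positive definite. -/
theorem stmt9 {n : ℕ} (D A : Matrix (Fin n) (Fin n) ℝ) (f : Fin n → ℝ)
    (hf : ∀ k, 0 < f k) (hD : D = Matrix.diagonal f)
    (hAsym : Aᵀ = A) (hAnn : ∀ i j, 0 ≤ A i j) (hAdiag : ∀ i, A i i = 0)
    (hPD : (D - A).PosDef)
    (hdd : ∀ i, -∑ j ∈ Finset.univ.erase i, (D - A) i j ≤ (D - A) i i) :
    (∀ μ ∈ spectrum ℝ (D⁻¹ * A), |μ| < 1) ∧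
      ∀ m : ℕ, 1 ≤ m → (D - D * (D⁻¹ * A) ^ (2 ^ m)).PosDef := by
  -- basic hermitian facts
  have hAh : A.IsHermitian := by
    have : Aᴴ = Aᵀ := by ext i j; simp [conjTranspose_apply, transpose_apply]
    rw [Matrix.IsHermitian, this, hAsym]
  have hDpos : D.PosDef := by rw [hD]; exact Matrix.PosDef.diagonal hf
  -- the absolute value trick : D + A is positive definite
  have hDApos : (D + A).PosDef := by
    refine Matrix.PosDef.of_dotProduct_mulVec_pos (hDpos.1.add hAh) fun x hx => ?_
    set y : Fin n → ℝ := fun i => |x i| with hy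
    have hy0 : y ≠ 0 := by
      intro h
      apply hx
      funext i
      have := congrFun h i
      simpa [hy, abs_eq_zero] using this
    have hpos : 0 < y ⬝ᵥ ((D - A) *ᵥ y) := by
      have := hPD.dotProduct_mulVec_pos hy0
      simpa using this
    have key : y ⬝ᵥ ((D - A) *ᵥ y) ≤ x ⬝ᵥ ((D + A) *ᵥ x) := by
      have expand : ∀ (M : Matrix (Fin n) (Fin n) ℝ) (v : Fin n → ℝ),
          v ⬝ᵥ (M *ᵥ v) = ∑ i, ∑ j, v i * (M i j * v j) := by
        intro M v
        simp [dotProduct, mulVec, Finset.mul_sum]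
      rw [expand, expand]
      refine Finset.sum_le_sum fun i _ => Finset.sum_le_sum fun j _ => ?_
      rcases eq_or_ne i j with rfl | hij
      · have hDii : D i i = f i := by rw [hD]; exact Matrix.diagonal_apply_eq f i
        have h1 : (D - A) i i = f i := by rw [Matrix.sub_apply, hDii, hAdiag, sub_zero]
        have h2 : (D + A) i i = f i := by rw [Matrix.add_apply, hDii, hAdiag, add_zero]
        rw [h1, h2]
        refine le_of_eq ?_
        show |x i| * (f i * |x i|) = x i * (f i * x i)
        calc |x i| * (f i * |x i|) = f i * (|x i| * |x i|) := by ring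
          _ = f i * (x i * x i) := by rw [abs_mul_abs_self]
          _ = x i * (f i * x i) := by ring
      · have hD0 : D i j = 0 := by rw [hD]; exact Matrix.diagonal_apply_ne f hij
        have h1 : (D - A) i j = -(A i j) := by rw [Matrix.sub_apply, hD0, zero_sub]
        have h2 : (D + A) i j = A i j := by rw [Matrix.add_apply, hD0, zero_add]
        rw [h1, h2]
        show |x i| * (-(A i j) * |x j|) ≤ x i * (A i j * x j)
        have key := mul_le_mul_of_nonneg_left (neg_abs_le (x i * x j)) (hAnn i j)
        calc |x i| * (-(A i j) * |x j|) = A i j * -|x i * x j| := by rw [abs_mul]; ring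
          _ ≤ A i j * (x i * x j) := key
          _ = x i * (A i j * x j) := by ring
    have : 0 < x ⬝ᵥ ((D + A) *ᵥ x) := lt_of_lt_of_le hpos key
    simpa using this
  have hDdet : IsUnit D.det := by
    rw [hD, Matrix.det_diagonal]
    exact (Finset.prod_pos fun i _ => hf i).ne'.isUnit
  have hDA : D * (D⁻¹ * A) = A := by
    rw [← Matrix.mul_assoc, Matrix.mul_nonsing_inv _ hDdet, Matrix.one_mul]
  -- Part 1 : spectrum
  have part1 : ∀ μ ∈ spectrum ℝ (D⁻¹ * A), |μ| < 1 := by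
    intro μ hμ
    rw [spectrum.mem_iff] at hμ
    have hdet0 : (algebraMap ℝ (Matrix (Fin n) (Fin n) ℝ) μ - D⁻¹ * A).det = 0 := by
      by_contra h
      exact hμ ((Matrix.isUnit_iff_isUnit_det _).mpr (isUnit_iff_ne_zero.mpr h))
    obtain ⟨v, hv0, hv⟩ := (Matrix.exists_mulVec_eq_zero_iff).mpr hdet0
    have hXv : (D⁻¹ * A) *ᵥ v = μ • v := by
      have h1 : (algebraMap ℝ (Matrix (Fin n) (Fin n) ℝ) μ) *ᵥ v = μ • v := by
        rw [Algebra.algebraMap_eq_smul_one]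
        simp [Matrix.smul_mulVec]
      rw [Matrix.sub_mulVec, h1, sub_eq_zero] at hv
      exact hv.symm
    have hAv : A *ᵥ v = μ • (D *ᵥ v) := by
      calc A *ᵥ v = (D * (D⁻¹ * A)) *ᵥ v := by rw [hDA]
        _ = D *ᵥ ((D⁻¹ * A) *ᵥ v) := by rw [← Matrix.mulVec_mulVec]
        _ = D *ᵥ (μ • v) := by rw [hXv]
        _ = μ • (D *ᵥ v) := Matrix.mulVec_smul _ _ _
    have ht : 0 < v ⬝ᵥ (D *ᵥ v) := by simpa using hDpos.dotProduct_mulVec_pos hv0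
    have h1 : 0 < v ⬝ᵥ (D *ᵥ v) - μ * (v ⬝ᵥ (D *ᵥ v)) := by
      have := hPD.dotProduct_mulVec_pos hv0
      simp only [star_trivial, Matrix.sub_mulVec, dotProduct_sub, hAv,
        dotProduct_smul, smul_eq_mul] at this
      linarith
    have h2 : 0 < v ⬝ᵥ (D *ᵥ v) + μ * (v ⬝ᵥ (D *ᵥ v)) := by
      have := hDApos.dotProduct_mulVec_pos hv0
      simp only [star_trivial, Matrix.add_mulVec, dotProduct_add, hAv,
        dotProduct_smul, smul_eq_mul] at this
      linarith
    rw [abs_lt]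
    constructor <;> nlinarith
  refine ⟨part1, fun m _ => ?_⟩
  -- Part 2 : set up square root of D
  set g : Fin n → ℝ := fun i => Real.sqrt (f i) with hg
  have hgpos : ∀ i, 0 < g i := fun i => Real.sqrt_pos.mpr (hf i)
  set E : Matrix (Fin n) (Fin n) ℝ := Matrix.diagonal g with hE
  set Ei : Matrix (Fin n) (Fin n) ℝ := Matrix.diagonal (fun i => (g i)⁻¹) with hEi
  have hEEi : E * Ei = 1 := by
    rw [hE, hEi, Matrix.diagonal_mul_diagonal, ← Matrix.diagonal_one]
    exact congrArg Matrix.diagonal (funext fun i => mul_inv_cancel₀ (hgpos i).ne')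
  have hEiE : Ei * E = 1 := by
    rw [hE, hEi, Matrix.diagonal_mul_diagonal, ← Matrix.diagonal_one]
    exact congrArg Matrix.diagonal (funext fun i => inv_mul_cancel₀ (hgpos i).ne')
  have hED : E * E = D := by
    rw [hE, hD, Matrix.diagonal_mul_diagonal]
    exact congrArg Matrix.diagonal (funext fun i => Real.mul_self_sqrt (hf i).le)
  have hEh : Eᴴ = E := by
    rw [hE, Matrix.diagonal_conjTranspose]
    exact congrArg Matrix.diagonal (funext fun i => rfl)
  have hEih : Eiᴴ = Ei := by
    rw [hEi, Matrix.diagonal_conjTranspose]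
    exact congrArg Matrix.diagonal (funext fun i => rfl)
  have hDinv : D⁻¹ = Ei * Ei := by
    refine Matrix.inv_eq_right_inv ?_
    calc D * (Ei * Ei) = E * E * Ei * Ei := by rw [hED, Matrix.mul_assoc]
      _ = E * (E * Ei) * Ei := by simp only [Matrix.mul_assoc]
      _ = 1 := by rw [hEEi, Matrix.mul_one, hEEi]
  have hEker : ∀ x, E *ᵥ x = 0 → x = 0 := by
    intro x hx
    have : (Ei * E) *ᵥ x = 0 := by rw [← Matrix.mulVec_mulVec, hx, Matrix.mulVec_zero]
    rwa [hEiE, Matrix.one_mulVec] at this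
  have hEiker : ∀ x, Ei *ᵥ x = 0 → x = 0 := by
    intro x hx
    have : (E * Ei) *ᵥ x = 0 := by rw [← Matrix.mulVec_mulVec, hx, Matrix.mulVec_zero]
    rwa [hEEi, Matrix.one_mulVec] at this
  set M : Matrix (Fin n) (Fin n) ℝ := Ei * A * Ei with hM
  have hMh : M.IsHermitian := by
    have h := isHermitian_conjTranspose_mul_mul Ei hAh
    rw [hEih] at h
    rw [hM]
    exact h
  have hXM : D⁻¹ * A = Ei * M * E := by
    calc D⁻¹ * A = Ei * Ei * A := by rw [hDinv]
      _ = Ei * (Ei * A * Ei) * E := by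
          simp only [Matrix.mul_assoc, hEiE, Matrix.mul_one]
      _ = Ei * M * E := by rw [hM]
  have h1mM : (1 - M).PosDef := by
    have heq : Eiᴴ * (D - A) * Ei = 1 - M := by
      rw [hEih, Matrix.mul_sub, Matrix.sub_mul, hM]
      congr 1
      calc Ei * D * Ei = Ei * (E * E) * Ei := by rw [hED]
        _ = (Ei * E) * (E * Ei) := by simp only [Matrix.mul_assoc]
        _ = 1 := by rw [hEiE, hEEi, Matrix.mul_one]
    rw [← heq]
    exact myPosDef_conj hPD Ei hEiker
  have h1pM : (1 + M).PosDef := by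
    have heq : Eiᴴ * (D + A) * Ei = 1 + M := by
      rw [hEih, Matrix.mul_add, Matrix.add_mul, hM]
      congr 1
      calc Ei * D * Ei = Ei * (E * E) * Ei := by rw [hED]
        _ = (Ei * E) * (E * Ei) := by simp only [Matrix.mul_assoc]
        _ = 1 := by rw [hEiE, hEEi, Matrix.mul_one]
    rw [← heq]
    exact myPosDef_conj hDApos Ei hEiker
  -- spectral theorem for M
  set U : Matrix (Fin n) (Fin n) ℝ := (Matrix.IsHermitian.eigenvectorUnitary hMh : Matrix (Fin n) (Fin n) ℝ) with hU
  set ev : Fin n → ℝ := hMh.eigenvalues with hev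
  have hUU : Uᴴ * U = 1 := by
    rw [← Matrix.star_eq_conjTranspose]
    exact (Matrix.IsHermitian.eigenvectorUnitary hMh).2.1
  have hUU' : U * Uᴴ = 1 := mul_eq_one_comm.mp hUU
  have hspec : M = U * Matrix.diagonal ev * Uᴴ := by
    have hthis := hMh.spectral_theorem
    rw [Unitary.conjStarAlgAut_apply, Matrix.star_eq_conjTranspose] at hthis
    have hcoe : Matrix.diagonal ((RCLike.ofReal : ℝ → ℝ) ∘ hMh.eigenvalues)
        = Matrix.diagonal ev :=
      congrArg Matrix.diagonal (funext fun i => congrFun RCLike.ofReal_real_eq_id _)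
    rw [hcoe] at hthis
    exact hthis
  have hUker : ∀ x, U *ᵥ x = 0 → x = 0 := by
    intro x hx
    have : (Uᴴ * U) *ᵥ x = 0 := by rw [← Matrix.mulVec_mulVec, hx, Matrix.mulVec_zero]
    rwa [hUU, Matrix.one_mulVec] at this
  have hUhker : ∀ x, Uᴴ *ᵥ x = 0 → x = 0 := by
    intro x hx
    have : (U * Uᴴ) *ᵥ x = 0 := by rw [← Matrix.mulVec_mulVec, hx, Matrix.mulVec_zero]
    rwa [hUU', Matrix.one_mulVec] at this
  have hUMU : Uᴴ * M * U = Matrix.diagonal ev := by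
    rw [hspec]
    calc Uᴴ * (U * Matrix.diagonal ev * Uᴴ) * U
        = (Uᴴ * U) * Matrix.diagonal ev * (Uᴴ * U) := by simp only [Matrix.mul_assoc]
      _ = Matrix.diagonal ev := by rw [hUU, Matrix.one_mul, Matrix.mul_one]
  -- eigenvalue bounds
  have hev_lt : ∀ i, ev i < 1 := by
    have : (Matrix.diagonal (fun i => 1 - ev i)).PosDef := by
      have heq : Uᴴ * (1 - M) * U = Matrix.diagonal (fun i => 1 - ev i) := by
        rw [Matrix.mul_sub, Matrix.mul_one, Matrix.sub_mul, hUU, hUMU, ← Matrix.diagonal_one,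
          Matrix.diagonal_sub]
      rw [← heq]
      exact myPosDef_conj h1mM U hUker
    intro i
    have := (Matrix.posDef_diagonal_iff.mp this) i
    linarith
  have hev_gt : ∀ i, -1 < ev i := by
    have : (Matrix.diagonal (fun i => 1 + ev i)).PosDef := by
      have heq : Uᴴ * (1 + M) * U = Matrix.diagonal (fun i => 1 + ev i) := by
        rw [Matrix.mul_add, Matrix.mul_one, Matrix.add_mul, hUU, hUMU, ← Matrix.diagonal_one,
          Matrix.diagonal_add]
      rw [← heq]
      exact myPosDef_conj h1pM U hUker
    intro i
    have := (Matrix.posDef_diagonal_iff.mp this) i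
    linarith
  set N : ℕ := 2 ^ m with hN
  have hNne : N ≠ 0 := pow_ne_zero m two_ne_zero
  have hevN : ∀ i, 0 < 1 - ev i ^ N := by
    intro i
    have habs : |ev i| < 1 := abs_lt.mpr ⟨hev_gt i, hev_lt i⟩
    have h1 : |ev i ^ N| < 1 := by
      rw [abs_pow]
      exact pow_lt_one₀ (abs_nonneg _) habs hNne
    have := le_abs_self (ev i ^ N)
    linarith
  have hMN : 1 - M ^ N = U * Matrix.diagonal (fun i => 1 - ev i ^ N) * Uᴴ := by
    have hpow : M ^ N = U * Matrix.diagonal (fun i => ev i ^ N) * Uᴴ := by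
      rw [hspec, myConj_pow U Uᴴ _ hUU hUU', Matrix.diagonal_pow]
      exact congrArg (fun C => U * Matrix.diagonal C * Uᴴ) (funext fun i => rfl)
    calc 1 - M ^ N = U * 1 * Uᴴ - U * Matrix.diagonal (fun i => ev i ^ N) * Uᴴ := by
          rw [Matrix.mul_one, hUU', hpow]
      _ = U * (1 - Matrix.diagonal (fun i => ev i ^ N)) * Uᴴ := by
          rw [Matrix.mul_sub, Matrix.sub_mul]
      _ = U * Matrix.diagonal (fun i => 1 - ev i ^ N) * Uᴴ := by
          rw [← Matrix.diagonal_one, Matrix.diagonal_sub]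
  have hMNpd : (1 - M ^ N).PosDef := by
    rw [hMN]
    have := myPosDef_conj (Matrix.PosDef.diagonal hevN) Uᴴ hUhker
    rwa [Matrix.conjTranspose_conjTranspose] at this
  -- conclude
  have hkey : D - D * (D⁻¹ * A) ^ N = Eᴴ * (1 - M ^ N) * E := by
    have hXk : (D⁻¹ * A) ^ N = Ei * M ^ N * E := by
      rw [hXM]
      exact myConj_pow Ei E _ hEEi hEiE N
    calc D - D * (D⁻¹ * A) ^ N = E * E - (E * E) * (Ei * M ^ N * E) := by rw [hED, hXk]
      _ = E * E - E * M ^ N * E := by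
          congr 1
          calc (E * E) * (Ei * M ^ N * E) = E * (E * Ei) * M ^ N * E := by
                simp only [Matrix.mul_assoc]
            _ = E * M ^ N * E := by rw [hEEi, Matrix.mul_one]
      _ = E * (1 - M ^ N) * E := by
          rw [Matrix.mul_sub, Matrix.sub_mul, Matrix.mul_one]
      _ = Eᴴ * (1 - M ^ N) * E := by rw [hEh]
  rw [hkey]
  exact myPosDef_conj hMNpd E hEker
end
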